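/- Suppose W̲(θ, q*) < G* for some θ ∈ Θ and θ^m > θ̲ (so θ̲ < θ^m < θ*). Then every solution q^OPT of (ROPT) satisfies q^OPT(θ) = q^BM(θ) for all θ ∈ (θ̲, θ^m). -/
import Mathlib


open MeasureTheory Set

noncomputable section

/-- The base environment: type space `Θ = [θl, θu]`, capacity `qbar`, lowest inverse
demand `Pl = P̲` (decreasing and continuous on `[0, qbar]` with `Pl 0 > θu`) and the
induced lowest demand `Dl = D̲`, with `Dl θl < qbar`. -/
structure Env where
  θl : ℝ
  θu : ℝ
  qbar : ℝ
  Pl : ℝ → ℝ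
  Dl : ℝ → ℝ
  θl_pos : 0 < θl
  θlu : θl < θu
  qbar_pos : 0 < qbar
  Pl_anti : StrictAntiOn Pl (Icc 0 qbar)
  Pl_cont : ContinuousOn Pl (Icc 0 qbar)
  Pl0 : θu < Pl 0
  Dl_inv : ∀ p, Pl qbar ≤ p → p ≤ Pl 0 → Dl p ∈ Icc (0:ℝ) qbar ∧ Pl (Dl p) = p
  Dl_high : ∀ p, Pl 0 < p → Dl p = 0
  Dl_low : ∀ p, p < Pl qbar → Dl p = qbar
  Dl_lt : Dl θl < qbar

namespace Env

/-- The type space `Θ = [θl, θu]`. -/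
def Θ (E : Env) : Set ℝ := Icc E.θl E.θu

/-- The lowest gross value function `V̲ (x) = ∫_0^x P̲`. -/
def Vl (E : Env) (x : ℝ) : ℝ := ∫ s in (0:ℝ)..x, E.Pl s

/-- `q_ℓ = D̲(θu)`: the efficient quantity at the lowest demand and highest cost. -/
def ql (E : Env) : ℝ := E.Dl E.θu

/-- `G* = V̲(q_ℓ) − θu · q_ℓ`: the maximal attainable guarantee. -/
def Gstar (E : Env) : ℝ := E.Vl E.ql - E.θu * E.ql

/-- A feasible quantity schedule: weakly decreasing on `Θ`, valued in `[0, qbar]`. -/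
def IsSchedule (E : Env) (q : ℝ → ℝ) : Prop :=
  AntitoneOn q E.Θ ∧ ∀ θ ∈ E.Θ, q θ ∈ Icc (0:ℝ) E.qbar

/-- `W̲(θ, q) = V̲(q(θ)) − θ q(θ) − ∫_θ^{θu} q`: ex-post welfare at the lowest demand
with zero rent for the highest type. -/
def Wl (E : Env) (q : ℝ → ℝ) (θ : ℝ) : ℝ :=
  E.Vl (q θ) - θ * q θ - ∫ y in θ..E.θu, q y

/-- An IC and IR (direct) quantity mechanism `(q, u)`. -/
def IsMech (E : Env) (q u : ℝ → ℝ) : Prop :=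
  E.IsSchedule q ∧ 0 ≤ u E.θu ∧
    ∀ θ ∈ E.Θ, u θ = u E.θu + ∫ y in θ..E.θu, q y

/-- The set `𝒱` of admissible gross value functions: integrals of decreasing continuous
inverse demands dominating `P̲` pointwise. -/
def IsValue (E : Env) (V : ℝ → ℝ) : Prop :=
  ∃ P : ℝ → ℝ, StrictAntiOn P (Icc 0 E.qbar) ∧ ContinuousOn P (Icc 0 E.qbar) ∧
    (∀ s ∈ Icc (0:ℝ) E.qbar, E.Pl s ≤ P s) ∧ ∀ x, V x = ∫ s in (0:ℝ)..x, P s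

/-- A Borel probability measure supported in `Θ` (the measure of a cdf `F ∈ 𝒻`). -/
def IsTech (E : Env) (μ : Measure ℝ) : Prop :=
  IsProbabilityMeasure μ ∧ μ (E.Θᶜ) = 0

/-- Ex-ante welfare `W(M; V, F)` of the mechanism `(q, u)` under value `V` and
cost technology `μ`. -/
def W (E : Env) (q u V : ℝ → ℝ) (μ : Measure ℝ) : ℝ :=
  ∫ θ, (V (q θ) - θ * q θ - u θ) ∂μ

/-- The welfare guarantee `G(M) = inf_{V ∈ 𝒱, F ∈ 𝒻} W(M; V, F)`. -/
def G (E : Env) (q u : ℝ → ℝ) : ℝ :=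
  sInf {w : ℝ | ∃ (V : ℝ → ℝ) (μ : Measure ℝ),
    E.IsValue V ∧ E.IsTech μ ∧ w = E.W q u V μ}

/-- The short list: IC and IR mechanisms with the highest guarantee. -/
def ShortList (E : Env) (q u : ℝ → ℝ) : Prop :=
  E.IsMech q u ∧ ∀ q' u' : ℝ → ℝ, E.IsMech q' u' → E.G q' u' ≤ E.G q u

/-- Feasibility in the program (ROPT): a schedule satisfying all robustness
constraints `W̲(θ, q) ≥ G*`. -/
def FeasibleROPT (E : Env) (q : ℝ → ℝ) : Prop :=
  E.IsSchedule q ∧ ∀ θ ∈ E.Θ, E.Gstar ≤ E.Wl q θ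

end Env

/-- A demand `D ∈ 𝒟`, bundled with the inverse demand `P` that induces it:
`P` decreasing and continuous on `[0, qbar]`, `P ≥ P̲` pointwise, `P 0 > θu`. -/
structure Demand (E : Env) where
  P : ℝ → ℝ
  D : ℝ → ℝ
  P_anti : StrictAntiOn P (Icc 0 E.qbar)
  P_cont : ContinuousOn P (Icc 0 E.qbar)
  P_ge : ∀ s ∈ Icc (0:ℝ) E.qbar, E.Pl s ≤ P s
  P0 : E.θu < P 0
  D_inv : ∀ p, P E.qbar ≤ p → p ≤ P 0 → D p ∈ Icc (0:ℝ) E.qbar ∧ P (D p) = p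
  D_high : ∀ p, P 0 < p → D p = 0
  D_low : ∀ p, p < P E.qbar → D p = E.qbar
  D_lt : D E.θl < E.qbar

namespace Demand

/-- The gross value function `V_D(x) = ∫_0^x P` induced by a demand `D ∈ 𝒟`. -/
def V {E : Env} (D : Demand E) (x : ℝ) : ℝ := ∫ s in (0:ℝ)..x, D.P s

end Demand

namespace Env

/-- The lowest demand `D̲` as an element of `𝒟`. -/
def DlDemand (E : Env) : Demand E where
  P := E.Pl
  D := E.Dl
  P_anti := E.Pl_anti
  P_cont := E.Pl_cont
  P_ge := fun _ _ => le_refl _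
  P0 := E.Pl0
  D_inv := E.Dl_inv
  D_high := E.Dl_high
  D_low := E.Dl_low
  D_lt := E.Dl_lt

/-- A price regulation `(p, t)`: nonnegative prices and transfers. -/
def IsPriceReg (E : Env) (p : ℝ → ℝ) (t : ℝ → Demand E → ℝ) : Prop :=
  (∀ θ ∈ E.Θ, 0 ≤ p θ) ∧ ∀ θ ∈ E.Θ, ∀ D : Demand E, 0 ≤ t θ D

/-- The rent `ũ(θ, D) = t(θ, D) − θ · D(p(θ))` of the monopolist. -/
def rent (E : Env) (p : ℝ → ℝ) (t : ℝ → Demand E → ℝ) (θ : ℝ) (D : Demand E) : ℝ :=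
  t θ D - θ * D.D (p θ)

/-- Ex-post incentive compatibility of a price regulation. -/
def EPIC (E : Env) (p : ℝ → ℝ) (t : ℝ → Demand E → ℝ) : Prop :=
  ∀ θ ∈ E.Θ, ∀ θ' ∈ E.Θ, ∀ D : Demand E,
    t θ' D - θ * D.D (p θ') ≤ E.rent p t θ D

/-- Ex-post individual rationality of a price regulation. -/
def EPIR (E : Env) (p : ℝ → ℝ) (t : ℝ → Demand E → ℝ) : Prop :=
  ∀ θ ∈ E.Θ, ∀ D : Demand E, 0 ≤ E.rent p t θ D

/-- Ex-post welfare `w̃(θ; D) = V_D(D(p(θ))) − θ·D(p(θ)) − ũ(θ, D)`. -/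
def wt (E : Env) (p : ℝ → ℝ) (t : ℝ → Demand E → ℝ) (θ : ℝ) (D : Demand E) : ℝ :=
  D.V (D.D (p θ)) - θ * D.D (p θ) - E.rent p t θ D

/-- Ex-ante welfare `W̃((p,t); D, F)` of a price regulation. -/
def Wt (E : Env) (p : ℝ → ℝ) (t : ℝ → Demand E → ℝ) (D : Demand E) (μ : Measure ℝ) : ℝ :=
  ∫ θ, E.wt p t θ D ∂μ

/-- The welfare guarantee `G̃((p,t)) = inf_{D ∈ 𝒟, F ∈ 𝒻} W̃((p,t); D, F)`. -/
def Gt (E : Env) (p : ℝ → ℝ) (t : ℝ → Demand E → ℝ) : ℝ :=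
  sInf {w : ℝ | ∃ (D : Demand E) (μ : Measure ℝ), E.IsTech μ ∧ w = E.Wt p t D μ}

/-- An EPIC and EPIR price regulation. -/
def IsAdmissiblePR (E : Env) (p : ℝ → ℝ) (t : ℝ → Demand E → ℝ) : Prop :=
  E.IsPriceReg p t ∧ E.EPIC p t ∧ E.EPIR p t

/-- The price short list: EPIC and EPIR price regulations with the highest guarantee. -/
def PriceShortList (E : Env) (p : ℝ → ℝ) (t : ℝ → Demand E → ℝ) : Prop :=
  E.IsAdmissiblePR p t ∧
    ∀ (p' : ℝ → ℝ) (t' : ℝ → Demand E → ℝ), E.IsAdmissiblePR p' t' → E.Gt p' t' ≤ E.Gt p t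

end Env

/-- The conjectured model: a regular cdf `F*` with density `f*` on `Θ`, and a
conjectured inverse demand `P*` (with induced demand `D*`) dominating `P̲`. -/
structure Model (E : Env) where
  Fstar : ℝ → ℝ
  fstar : ℝ → ℝ
  Pstar : ℝ → ℝ
  Dstar : ℝ → ℝ
  fstar_pos : ∀ θ ∈ E.Θ, 0 < fstar θ
  Fstar_ac : ∀ θ ∈ E.Θ, Fstar θ = ∫ y in E.θl..θ, fstar y
  Fstar_l : Fstar E.θl = 0
  Fstar_u : Fstar E.θu = 1
  zstar_cont : ContinuousOn (fun θ => θ + Fstar θ / fstar θ) E.Θ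
  zstar_mono : StrictMonoOn (fun θ => θ + Fstar θ / fstar θ) E.Θ
  Pstar_anti : StrictAntiOn Pstar (Icc 0 E.qbar)
  Pstar_cont : ContinuousOn Pstar (Icc 0 E.qbar)
  Pstar_ge : ∀ s ∈ Icc (0:ℝ) E.qbar, E.Pl s ≤ Pstar s
  Pstar0 : E.θu < Pstar 0
  Dstar_inv : ∀ p, Pstar E.qbar ≤ p → p ≤ Pstar 0 →
    Dstar p ∈ Icc (0:ℝ) E.qbar ∧ Pstar (Dstar p) = p
  Dstar_high : ∀ p, Pstar 0 < p → Dstar p = 0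
  Dstar_low : ∀ p, p < Pstar E.qbar → Dstar p = E.qbar
  Dstar_lt : Dstar E.θl < E.qbar

namespace Model

variable {E : Env} (Mo : Model E)

/-- The virtual cost `z*(θ) = θ + F*(θ)/f*(θ)`. -/
def zstar (θ : ℝ) : ℝ := θ + Mo.Fstar θ / Mo.fstar θ

/-- The conjectured gross value function `V*(x) = ∫_0^x P*`. -/
def Vstar (x : ℝ) : ℝ := ∫ s in (0:ℝ)..x, Mo.Pstar s

/-- The Baron–Myerson schedule `q^BM(θ) = D*(z*(θ))`. -/
def qBM (θ : ℝ) : ℝ := Mo.Dstar (Mo.zstar θ)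

/-- The Baron–Myerson-with-quantity-floor schedule `q*(θ) = max{q^BM(θ), q_ℓ}`. -/
def qstar (θ : ℝ) : ℝ := max (Mo.qBM θ) E.ql

/-- The objective of (ROPT): expected virtual surplus under the conjectured model. -/
def J (q : ℝ → ℝ) : ℝ :=
  ∫ θ in E.θl..E.θu, (Mo.Vstar (q θ) - Mo.zstar θ * q θ) * Mo.fstar θ

/-- `q` solves the program (ROPT). -/
def SolvesROPT (q : ℝ → ℝ) : Prop :=
  E.FeasibleROPT q ∧ ∀ q' : ℝ → ℝ, E.FeasibleROPT q' → Mo.J q' ≤ Mo.J q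

/-- `θ*`: the unique solution of `q^BM(θ*) = q_ℓ` in `Θ` when `q^BM(θu) < q_ℓ`;
otherwise `θ* = θu`. -/
def IsThetaStar (θs : ℝ) : Prop :=
  (Mo.qBM E.θu < E.ql ∧ θs ∈ E.Θ ∧ Mo.qBM θs = E.ql) ∨
    (E.ql ≤ Mo.qBM E.θu ∧ θs = E.θu)

/-- `θ^m`: the largest minimizer of `W̲(·, q*)` over `Θ`. -/
def IsThetaM (θm : ℝ) : Prop :=
  θm ∈ E.Θ ∧ (∀ θ' ∈ E.Θ, E.Wl Mo.qstar θm ≤ E.Wl Mo.qstar θ') ∧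
    ∀ θ ∈ E.Θ, (∀ θ' ∈ E.Θ, E.Wl Mo.qstar θ ≤ E.Wl Mo.qstar θ') → θ ≤ θm

/-- The conjectured demand `D*` as an element of `𝒟`. -/
def DstarDemand : Demand E where
  P := Mo.Pstar
  D := Mo.Dstar
  P_anti := Mo.Pstar_anti
  P_cont := Mo.Pstar_cont
  P_ge := Mo.Pstar_ge
  P0 := Mo.Pstar0
  D_inv := Mo.Dstar_inv
  D_high := Mo.Dstar_high
  D_low := Mo.Dstar_low
  D_lt := Mo.Dstar_lt

/-- Expected welfare `W((q,u); V*, F*)` of a quantity mechanism under the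
conjectured model. -/
def WStar (q u : ℝ → ℝ) : ℝ :=
  ∫ θ in E.θl..E.θu, (Mo.Vstar (q θ) - θ * q θ - u θ) * Mo.fstar θ

/-- Expected welfare `W̃((p,t); D*, F*)` of a price regulation under the
conjectured model. -/
def WtStar (p : ℝ → ℝ) (t : ℝ → Demand E → ℝ) : ℝ :=
  ∫ θ in E.θl..E.θu, E.wt p t θ Mo.DstarDemand * Mo.fstar θ

/-- A robustly optimal price regulation: in the price short list, and maximizing
expected welfare under the conjectured model over the price short list. -/
def RobustlyOptimalPR (p : ℝ → ℝ) (t : ℝ → Demand E → ℝ) : Prop :=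
  E.PriceShortList p t ∧
    ∀ (p' : ℝ → ℝ) (t' : ℝ → Demand E → ℝ), E.PriceShortList p' t' →
      Mo.WtStar p' t' ≤ Mo.WtStar p t

/-- A Baron–Myerson-with-price-cap regulation. -/
def IsBMPriceCap (p : ℝ → ℝ) (t : ℝ → Demand E → ℝ) : Prop :=
  E.IsAdmissiblePR p t ∧
  (∀ θ ∈ E.Θ, p θ = min (Mo.zstar θ) E.θu) ∧
  (∀ θ ∈ E.Θ, ∀ D : Demand E,
    E.rent p t θ D = E.rent p t E.θu D + ∫ y in θ..E.θu, D.D (p y)) ∧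
  (∀ D : Demand E, D ≠ E.DlDemand → D ≠ Mo.DstarDemand →
    0 ≤ E.rent p t E.θu D ∧
      E.rent p t E.θu D ≤ D.V (D.D E.θu) - E.θu * D.D E.θu - E.Gstar) ∧
  E.rent p t E.θu E.DlDemand = 0 ∧ E.rent p t E.θu Mo.DstarDemand = 0

end Model


section Aux

variable {E : Env} (Mo : Model E)

namespace RobustAux

lemma theta_mem_l : E.θl ∈ E.Θ := ⟨le_refl _, E.θlu.le⟩
lemma theta_mem_u : E.θu ∈ E.Θ := ⟨E.θlu.le, le_refl _⟩

lemma Pstar_qbar_lt : Mo.Pstar E.qbar < Mo.Pstar 0 :=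
  Mo.Pstar_anti (by constructor <;> simp [E.qbar_pos.le])
    (by constructor <;> simp [E.qbar_pos.le]) E.qbar_pos

lemma Dstar_mem (p : ℝ) : Mo.Dstar p ∈ Icc (0:ℝ) E.qbar := by
  rcases lt_or_ge p (Mo.Pstar E.qbar) with h | h
  · rw [Mo.Dstar_low p h]; exact ⟨E.qbar_pos.le, le_refl _⟩
  rcases le_or_gt p (Mo.Pstar 0) with h' | h'
  · exact (Mo.Dstar_inv p h h').1
  · rw [Mo.Dstar_high p h']; exact ⟨le_refl _, E.qbar_pos.le⟩

lemma Dstar_interior {p : ℝ} (h0 : 0 < Mo.Dstar p) (h1 : Mo.Dstar p < E.qbar) :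
    Mo.Pstar (Mo.Dstar p) = p := by
  rcases lt_or_ge p (Mo.Pstar E.qbar) with h | h
  · exact absurd (Mo.Dstar_low p h) (by intro hh; rw [hh] at h1; exact lt_irrefl _ h1)
  rcases le_or_gt p (Mo.Pstar 0) with h' | h'
  · exact (Mo.Dstar_inv p h h').2
  · exact absurd (Mo.Dstar_high p h') (by intro hh; rw [hh] at h0; exact lt_irrefl _ h0)

lemma Dstar_anti : Antitone Mo.Dstar := by
  intro p₁ p₂ hp
  rcases lt_or_ge p₁ (Mo.Pstar E.qbar) with h1 | h1
  · rw [Mo.Dstar_low p₁ h1]; exact (Dstar_mem Mo p₂).2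
  rcases le_or_gt p₂ (Mo.Pstar 0) with h2 | h2
  · -- both in range
    have h1' : p₁ ≤ Mo.Pstar 0 := hp.trans h2
    have h2' : Mo.Pstar E.qbar ≤ p₂ := h1.trans hp
    obtain ⟨m1, e1⟩ := Mo.Dstar_inv p₁ h1 h1'
    obtain ⟨m2, e2⟩ := Mo.Dstar_inv p₂ h2' h2
    by_contra hcon
    push_neg at hcon
    have := Mo.Pstar_anti m1 m2 hcon
    rw [e1, e2] at this
    exact absurd hp (not_le.2 this)
  · rw [Mo.Dstar_high p₂ h2]; exact (Dstar_mem Mo p₁).1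

lemma zstar_theta_l : Mo.zstar E.θl = E.θl := by
  unfold Model.zstar
  rw [Mo.Fstar_l, zero_div, add_zero]

lemma qBM_mem (θ : ℝ) : Mo.qBM θ ∈ Icc (0:ℝ) E.qbar := Dstar_mem Mo _

lemma qBM_anti : AntitoneOn Mo.qBM E.Θ := fun a ha b hb hab =>
  Dstar_anti Mo (Mo.zstar_mono.monotoneOn ha hb hab)

lemma qBM_lt_qbar {θ : ℝ} (hθ : θ ∈ E.Θ) : Mo.qBM θ < E.qbar := by
  have h1 : Mo.qBM θ ≤ Mo.qBM E.θl := qBM_anti Mo (theta_mem_l) hθ hθ.1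
  have h2 : Mo.qBM E.θl = Mo.Dstar E.θl := by
    unfold Model.qBM; rw [zstar_theta_l]
  exact lt_of_le_of_lt (h1.trans h2.le) Mo.Dstar_lt

/-- If `qBM θ ∈ (0, qbar)` then `Pstar (qBM θ) = zstar θ`. -/
lemma Pstar_qBM {θ : ℝ} (h0 : 0 < Mo.qBM θ) (h1 : Mo.qBM θ < E.qbar) :
    Mo.Pstar (Mo.qBM θ) = Mo.zstar θ := Dstar_interior Mo h0 h1

end RobustAux

namespace RobustAux

/-- Integrability of a continuous-on-`[0,qbar]` price on subintervals. -/
lemma P_intInt {P : ℝ → ℝ} (hP : ContinuousOn P (Icc 0 E.qbar)) {a b : ℝ}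
    (ha : a ∈ Icc (0:ℝ) E.qbar) (hb : b ∈ Icc (0:ℝ) E.qbar) :
    IntervalIntegrable P volume a b := by
  apply ContinuousOn.intervalIntegrable
  apply hP.mono
  exact uIcc_subset_Icc ha hb

lemma Vl_sub {a b : ℝ} (ha : a ∈ Icc (0:ℝ) E.qbar) (hb : b ∈ Icc (0:ℝ) E.qbar) :
    E.Vl b - E.Vl a = ∫ s in a..b, E.Pl s := by
  have h0 : (0:ℝ) ∈ Icc (0:ℝ) E.qbar := ⟨le_refl _, E.qbar_pos.le⟩
  exact intervalIntegral.integral_interval_sub_left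
    (P_intInt E.Pl_cont h0 hb) (P_intInt E.Pl_cont h0 ha)

lemma Vstar_sub {a b : ℝ} (ha : a ∈ Icc (0:ℝ) E.qbar) (hb : b ∈ Icc (0:ℝ) E.qbar) :
    Mo.Vstar b - Mo.Vstar a = ∫ s in a..b, Mo.Pstar s := by
  have h0 : (0:ℝ) ∈ Icc (0:ℝ) E.qbar := ⟨le_refl _, E.qbar_pos.le⟩
  exact intervalIntegral.integral_interval_sub_left
    (P_intInt Mo.Pstar_cont h0 hb) (P_intInt Mo.Pstar_cont h0 ha)

/-- `∫_a^b P ≤ (b-a) P a` for an antitone `P`. -/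
lemma int_le_left {P : ℝ → ℝ} (hP : ContinuousOn P (Icc 0 E.qbar))
    (hPa : AntitoneOn P (Icc 0 E.qbar)) {a b : ℝ}
    (ha : a ∈ Icc (0:ℝ) E.qbar) (hb : b ∈ Icc (0:ℝ) E.qbar) (hab : a ≤ b) :
    ∫ s in a..b, P s ≤ (b - a) * P a := by
  have h := intervalIntegral.integral_mono_on hab (P_intInt hP ha hb)
    (intervalIntegrable_const (c := P a))
    (fun x hx => hPa ha ⟨ha.1.trans hx.1, hx.2.trans hb.2⟩ hx.1)
  simpa using h

/-- `(b-a) P b ≤ ∫_a^b P` for an antitone `P`. -/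
lemma left_le_int {P : ℝ → ℝ} (hP : ContinuousOn P (Icc 0 E.qbar))
    (hPa : AntitoneOn P (Icc 0 E.qbar)) {a b : ℝ}
    (ha : a ∈ Icc (0:ℝ) E.qbar) (hb : b ∈ Icc (0:ℝ) E.qbar) (hab : a ≤ b) :
    (b - a) * P b ≤ ∫ s in a..b, P s := by
  have h := intervalIntegral.integral_mono_on hab
    (intervalIntegrable_const (c := P b)) (P_intInt hP ha hb)
    (fun x hx => hPa ⟨ha.1.trans hx.1, hx.2.trans hb.2⟩ hb hx.2)
  simpa using h

/-- strict: `∫_a^b Pstar > (b-a) Pstar b` when `a < b`. -/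
lemma int_gt_right {a b : ℝ}
    (ha : a ∈ Icc (0:ℝ) E.qbar) (hb : b ∈ Icc (0:ℝ) E.qbar) (hab : a < b) :
    (b - a) * Mo.Pstar b < ∫ s in a..b, Mo.Pstar s := by
  have hint : IntervalIntegrable (fun s => Mo.Pstar s - Mo.Pstar b) volume a b :=
    (P_intInt Mo.Pstar_cont ha hb).sub intervalIntegrable_const
  have hpos : 0 < ∫ s in a..b, (Mo.Pstar s - Mo.Pstar b) := by
    apply intervalIntegral.intervalIntegral_pos_of_pos_on hint _ hab
    intro x hx
    have := Mo.Pstar_anti ⟨ha.1.trans hx.1.le, hx.2.le.trans hb.2⟩ hb hx.2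
    linarith
  rw [intervalIntegral.integral_sub (P_intInt Mo.Pstar_cont ha hb) intervalIntegrable_const] at hpos
  simp only [intervalIntegral.integral_const, smul_eq_mul] at hpos
  linarith

lemma int_lt_left {a b : ℝ}
    (ha : a ∈ Icc (0:ℝ) E.qbar) (hb : b ∈ Icc (0:ℝ) E.qbar) (hab : a < b) :
    ∫ s in a..b, Mo.Pstar s < (b - a) * Mo.Pstar a := by
  have hint : IntervalIntegrable (fun s => Mo.Pstar a - Mo.Pstar s) volume a b :=
    intervalIntegrable_const.sub (P_intInt Mo.Pstar_cont ha hb)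
  have hpos : 0 < ∫ s in a..b, (Mo.Pstar a - Mo.Pstar s) := by
    apply intervalIntegral.intervalIntegral_pos_of_pos_on hint _ hab
    intro x hx
    have := Mo.Pstar_anti ha ⟨ha.1.trans hx.1.le, hx.2.le.trans hb.2⟩ hx.1
    linarith
  rw [intervalIntegral.integral_sub intervalIntegrable_const (P_intInt Mo.Pstar_cont ha hb)] at hpos
  simp only [intervalIntegral.integral_const, smul_eq_mul] at hpos
  linarith

/-- schedules (antitone on `Θ`) are interval integrable on subintervals of `Θ`. -/
lemma sched_intInt {q : ℝ → ℝ} (hq : AntitoneOn q E.Θ) {a b : ℝ}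
    (ha : a ∈ E.Θ) (hb : b ∈ E.Θ) : IntervalIntegrable q volume a b := by
  apply AntitoneOn.intervalIntegrable
  apply hq.mono
  exact uIcc_subset_Icc ha hb

end RobustAux

namespace RobustAux

/-- `qBM θ` is the strict argmax of `x ↦ Vstar x - zstar θ * x` on `[0, qbar]`. -/
lemma argmax_strict {θ : ℝ} (x : ℝ) (hx : x ∈ Icc (0:ℝ) E.qbar) (hne : x ≠ Mo.qBM θ) :
    Mo.Vstar x - Mo.zstar θ * x < Mo.Vstar (Mo.qBM θ) - Mo.zstar θ * Mo.qBM θ := by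
  set z := Mo.zstar θ with hz
  set b := Mo.qBM θ with hbdef
  have hbm : b ∈ Icc (0:ℝ) E.qbar := qBM_mem Mo θ
  have hbD : b = Mo.Dstar z := rfl
  rcases lt_trichotomy x b with hlt | heq | hgt
  · -- x < b : Vstar b - Vstar x = ∫_x^b Pstar > (b-x) Pstar b ≥ (b-x) z
    have hkey : (b - x) * z < ∫ s in x..b, Mo.Pstar s := by
      rcases lt_or_ge z (Mo.Pstar E.qbar) with hzlow | hzge
      · -- b = qbar, Pstar s > Pstar qbar > z on [x,b)
        calc (b - x) * z ≤ (b - x) * Mo.Pstar b := by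
              have : z ≤ Mo.Pstar b := by
                rw [hbD, Mo.Dstar_low z hzlow]; exact hzlow.le
              nlinarith [sub_pos.2 hlt]
        _ < _ := int_gt_right Mo hx hbm hlt
      · rcases le_or_gt z (Mo.Pstar 0) with hzhi | hzhi
        · have : Mo.Pstar b = z := by rw [hbD]; exact (Mo.Dstar_inv z hzge hzhi).2
          calc (b - x) * z = (b - x) * Mo.Pstar b := by rw [this]
          _ < _ := int_gt_right Mo hx hbm hlt
        · exfalso
          have : b = 0 := by rw [hbD]; exact Mo.Dstar_high z hzhi
          rw [this] at hlt; exact absurd hx.1 (not_le.2 hlt)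
    have hsub := Vstar_sub Mo hx hbm
    linarith
  · exact absurd heq hne
  · -- b < x : Vstar x - Vstar b = ∫_b^x Pstar < (x-b) z
    have hkey : (∫ s in b..x, Mo.Pstar s) < (x - b) * z := by
      rcases lt_or_ge (Mo.Pstar 0) z with hzhi | hzhi
      · have hb0 : b = 0 := by rw [hbD]; exact Mo.Dstar_high z hzhi
        calc (∫ s in b..x, Mo.Pstar s) < (x - b) * Mo.Pstar b := int_lt_left Mo hbm hx hgt
        _ ≤ (x - b) * z := by
              rw [hb0]; nlinarith [sub_pos.2 hgt, hzhi]
      · rcases le_or_gt (Mo.Pstar E.qbar) z with hzge | hzlow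
        · have : Mo.Pstar b = z := by rw [hbD]; exact (Mo.Dstar_inv z hzge hzhi).2
          calc (∫ s in b..x, Mo.Pstar s) < (x - b) * Mo.Pstar b := int_lt_left Mo hbm hx hgt
          _ = (x - b) * z := by rw [this]
        · exfalso
          have : b = E.qbar := by rw [hbD]; exact Mo.Dstar_low z hzlow
          rw [this] at hgt; exact absurd hx.2 (not_le.2 hgt)
    have hsub := Vstar_sub Mo hbm hx
    linarith

lemma argmax_le {θ : ℝ} (x : ℝ) (hx : x ∈ Icc (0:ℝ) E.qbar) :
    Mo.Vstar x - Mo.zstar θ * x ≤ Mo.Vstar (Mo.qBM θ) - Mo.zstar θ * Mo.qBM θ := by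
  rcases eq_or_ne x (Mo.qBM θ) with h | h
  · rw [h]
  · exact (argmax_strict Mo x hx h).le

end RobustAux

namespace RobustAux

lemma fstar_intInt : IntervalIntegrable Mo.fstar volume E.θl E.θu := by
  by_contra h
  have h1 := Mo.Fstar_ac E.θu (theta_mem_u)
  rw [intervalIntegral.integral_undef h] at h1
  rw [Mo.Fstar_u] at h1
  norm_num at h1

lemma Vstar_contOn : ContinuousOn Mo.Vstar (Icc 0 E.qbar) := by
  have h : IntegrableOn Mo.Pstar (uIcc 0 E.qbar) volume := by
    rw [uIcc_of_le E.qbar_pos.le]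
    exact Mo.Pstar_cont.integrableOn_Icc
  have := intervalIntegral.continuousOn_primitive_interval h
  rw [uIcc_of_le E.qbar_pos.le] at this
  exact this

lemma zstar_measurable : Measurable (fun θ => Mo.zstar (max E.θl (min θ E.θu))) := by
  have hcl : Continuous fun θ : ℝ => max E.θl (min θ E.θu) :=
    continuous_const.max (continuous_id.min continuous_const)
  have hmem : ∀ θ : ℝ, max E.θl (min θ E.θu) ∈ E.Θ := fun θ =>
    ⟨le_max_left _ _, max_le E.θlu.le (min_le_right _ _)⟩
  exact (Mo.zstar_cont.comp_continuous hcl hmem).measurable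

lemma J_int {q : ℝ → ℝ} (hq : AntitoneOn q E.Θ)
    (hmem : ∀ θ ∈ E.Θ, q θ ∈ Icc (0:ℝ) E.qbar) :
    IntervalIntegrable (fun θ => (Mo.Vstar (q θ) - Mo.zstar θ * q θ) * Mo.fstar θ)
      volume E.θl E.θu := by
  set cl : ℝ → ℝ := fun θ => max E.θl (min θ E.θu) with hcl_def
  have hcl_mono : Monotone cl := fun a b hab =>
    max_le_max le_rfl (min_le_min hab le_rfl)
  have hcl_mem : ∀ θ : ℝ, cl θ ∈ E.Θ := fun θ =>
    ⟨le_max_left _ _, max_le E.θlu.le (min_le_right _ _)⟩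
  have hcl_id : ∀ θ ∈ E.Θ, cl θ = θ := fun θ hθ => by
    simp only [hcl_def]
    rw [min_eq_left hθ.2, max_eq_right hθ.1]
  set qe : ℝ → ℝ := fun θ => q (cl θ) with hqe_def
  have hqe_anti : Antitone qe := fun a b hab =>
    hq (hcl_mem a) (hcl_mem b) (hcl_mono hab)
  have hqe_meas : Measurable qe := hqe_anti.measurable
  have hqe_mem : ∀ θ : ℝ, qe θ ∈ Icc (0:ℝ) E.qbar := fun θ => hmem _ (hcl_mem θ)
  set cl2 : ℝ → ℝ := fun x => max 0 (min x E.qbar) with hcl2_def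
  have hcl2_cont : Continuous cl2 := continuous_const.max (continuous_id.min continuous_const)
  have hcl2_mem : ∀ x : ℝ, cl2 x ∈ Icc (0:ℝ) E.qbar := fun x =>
    ⟨le_max_left _ _, max_le E.qbar_pos.le (min_le_right _ _)⟩
  have hcl2_id : ∀ x ∈ Icc (0:ℝ) E.qbar, cl2 x = x := fun x hx => by
    simp only [hcl2_def]
    rw [min_eq_left hx.2, max_eq_right hx.1]
  set Vc : ℝ → ℝ := fun x => Mo.Vstar (cl2 x) with hVc_def
  have hVc_cont : Continuous Vc :=
    (Vstar_contOn Mo).comp_continuous hcl2_cont hcl2_mem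
  set ze : ℝ → ℝ := fun θ => Mo.zstar (cl θ) with hze_def
  have hze_cont : Continuous ze := by
    have hclc : Continuous cl := continuous_const.max (continuous_id.min continuous_const)
    exact Mo.zstar_cont.comp_continuous hclc hcl_mem
  set g : ℝ → ℝ := fun θ => (Vc (qe θ) - ze θ * qe θ) * Mo.fstar θ with hg_def
  have hfs_int : IntegrableOn Mo.fstar (Ioc E.θl E.θu) volume :=
    (intervalIntegrable_iff_integrableOn_Ioc_of_le E.θlu.le).1 (fstar_intInt Mo)
  -- bounds
  obtain ⟨C1, hC1⟩ := (isCompact_Icc (a := (0:ℝ)) (b := E.qbar)).exists_bound_of_continuousOn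
    (hVc_cont.continuousOn)
  obtain ⟨C2, hC2⟩ := (isCompact_Icc (a := E.θl) (b := E.θu)).exists_bound_of_continuousOn
    (hze_cont.continuousOn)
  set C : ℝ := C1 + C2 * E.qbar + 1 with hC_def
  have hgm : AEStronglyMeasurable g (volume.restrict (Ioc E.θl E.θu)) := by
    apply AEStronglyMeasurable.mul
    · exact ((hVc_cont.measurable.comp hqe_meas).sub
        ((hze_cont.measurable).mul hqe_meas)).aestronglyMeasurable
    · exact hfs_int.aestronglyMeasurable
  have hbound : ∀ θ ∈ Ioc E.θl E.θu, ‖g θ‖ ≤ C * ‖Mo.fstar θ‖ := by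
    intro θ hθ
    have hθΘ : θ ∈ E.Θ := ⟨hθ.1.le, hθ.2⟩
    have h1 : ‖Vc (qe θ)‖ ≤ C1 := hC1 _ (hqe_mem θ)
    have h2 : ‖ze θ‖ ≤ C2 := hC2 θ hθΘ
    have h3 : ‖qe θ‖ ≤ E.qbar := by
      rw [Real.norm_eq_abs, abs_le]
      exact ⟨by linarith [(hqe_mem θ).1, E.qbar_pos.le], (hqe_mem θ).2⟩
    have : ‖Vc (qe θ) - ze θ * qe θ‖ ≤ C1 + C2 * E.qbar := by
      calc ‖Vc (qe θ) - ze θ * qe θ‖ ≤ ‖Vc (qe θ)‖ + ‖ze θ * qe θ‖ := norm_sub_le _ _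
      _ ≤ C1 + C2 * E.qbar := by
          rw [norm_mul]
          have h2' : (0:ℝ) ≤ ‖qe θ‖ := norm_nonneg _
          have h0 : ‖ze θ‖ * ‖qe θ‖ ≤ C2 * E.qbar := by
            apply mul_le_mul h2 h3 h2' ((norm_nonneg _).trans h2)
          linarith
    have h5 : ‖g θ‖ = ‖Vc (qe θ) - ze θ * qe θ‖ * ‖Mo.fstar θ‖ := by
      simp only [hg_def]; exact norm_mul _ _
    rw [h5]
    apply mul_le_mul_of_nonneg_right _ (norm_nonneg _)
    simp only [hC_def]; linarith
  have hg_int : IntegrableOn g (Ioc E.θl E.θu) volume := by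
    apply Integrable.mono' (hfs_int.norm.const_mul C) hgm
    exact (ae_restrict_iff' measurableSet_Ioc).2 (Filter.Eventually.of_forall hbound)
  rw [intervalIntegrable_iff_integrableOn_Ioc_of_le E.θlu.le]
  apply hg_int.congr_fun _ measurableSet_Ioc
  intro θ hθ
  have hθΘ : θ ∈ E.Θ := ⟨hθ.1.le, hθ.2⟩
  simp only [hg_def, hqe_def, hze_def]
  rw [hcl_id θ hθΘ]
  show (Mo.Vstar (cl2 (q θ)) - _) * _ = _
  rw [hcl2_id _ (hmem θ hθΘ)]

end RobustAux

end Aux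

set_option maxHeartbeats 2000000 in
open RobustAux in
/-- Proposition 2(c): if the Baron–Myerson-with-quantity-floor mechanism is not robustly
optimal and `θ^m > θl`, every solution of (ROPT) coincides with `q^BM` on `(θl, θ^m)`. -/
theorem ROPT_no_adjustment_at_bottom (E : Env) (Mo : Model E)
    (hviol : ∃ θ ∈ E.Θ, E.Wl Mo.qstar θ < E.Gstar)
    (θm : ℝ) (hθm : Mo.IsThetaM θm) (hθmgt : E.θl < θm)
    (qOPT : ℝ → ℝ) (hOPT : Mo.SolvesROPT qOPT) :
    ∀ θ ∈ Ioo E.θl θm, qOPT θ = Mo.qBM θ := by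
  obtain ⟨⟨⟨hq_anti, hq_mem⟩, hq_con⟩, hq_opt⟩ := hOPT
  obtain ⟨hθmΘ, hθm_min, hθm_max⟩ := hθm
  obtain ⟨θv, hθvΘ, hθv⟩ := hviol
  have hθmu : θm ≤ E.θu := hθmΘ.2
  have hWm_lt : E.Wl Mo.qstar θm < E.Gstar := lt_of_le_of_lt (hθm_min θv hθvΘ) hθv
  set c := Mo.qBM θm with hc_def
  have hc_mem : c ∈ Icc (0:ℝ) E.qbar := qBM_mem Mo θm
  have hc_lt_qbar : c < E.qbar := qBM_lt_qbar Mo hθmΘ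
  have hqstar_anti : AntitoneOn Mo.qstar E.Θ := fun a ha b hb hab =>
    max_le_max (qBM_anti Mo ha hb hab) le_rfl
  -- `ql ≤ c`
  have hql_le_c : E.ql ≤ c := by
    by_contra hcon
    push_neg at hcon
    have h1 : ∀ y ∈ Icc θm E.θu, Mo.qstar y = E.ql := by
      intro y hy
      apply max_eq_right
      exact ((qBM_anti Mo hθmΘ ⟨hθmΘ.1.trans hy.1, hy.2⟩ hy.1).trans hcon.le)
    have h2 : (∫ y in θm..E.θu, Mo.qstar y) = (E.θu - θm) * E.ql := by
      rw [intervalIntegral.integral_congr (g := fun _ => E.ql)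
        (fun y hy => h1 y (by rwa [uIcc_of_le hθmu] at hy))]
      simp [smul_eq_mul]
    have h3 : E.Wl Mo.qstar θm = E.Gstar := by
      simp only [Env.Wl, Env.Gstar]
      rw [h2, h1 θm ⟨le_rfl, hθmu⟩]
      ring
    rw [h3] at hWm_lt
    exact lt_irrefl _ hWm_lt
  -- basic facts about `ql`
  have hθu_ge : E.Pl E.qbar ≤ E.θu := by
    by_contra h
    push_neg at h
    have h2 : E.ql = E.qbar := E.Dl_low E.θu h
    rw [h2] at hql_le_c
    linarith
  obtain ⟨hql_mem, hPl_ql⟩ := E.Dl_inv E.θu hθu_ge E.Pl0.le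
  have hql_pos : 0 < E.ql := by
    rcases eq_or_lt_of_le hql_mem.1 with h | h
    · exfalso
      rw [← h] at hPl_ql
      exact absurd hPl_ql (ne_of_gt E.Pl0)
    · exact h
  have hc_pos : 0 < c := lt_of_lt_of_le hql_pos hql_le_c
  have hPstar_c : Mo.Pstar c = Mo.zstar θm := Pstar_qBM Mo hc_pos hc_lt_qbar
  -- qstar facts
  have hqstar_bot : ∀ θ ∈ Icc E.θl θm, Mo.qstar θ = Mo.qBM θ := by
    intro θ hθ
    exact max_eq_left (hql_le_c.trans (qBM_anti Mo ⟨hθ.1, hθ.2.trans hθmu⟩ hθmΘ hθ.2))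
  have hqstar_θm : Mo.qstar θm = c := hqstar_bot θm ⟨hθmgt.le, le_rfl⟩
  have hqstar_top_le : ∀ θ ∈ Icc θm E.θu, Mo.qstar θ ≤ c := by
    intro θ hθ
    rw [← hqstar_θm]
    exact hqstar_anti hθmΘ ⟨hθmΘ.1.trans hθ.1, hθ.2⟩ hθ.1
  have hqBM_gt : ∀ θ ∈ Ico E.θl θm, c < Mo.qBM θ := by
    intro θ hθ
    have hθΘ : θ ∈ E.Θ := ⟨hθ.1, hθ.2.le.trans hθmu⟩
    rcases eq_or_lt_of_le (qBM_anti Mo hθΘ hθmΘ hθ.2.le) with h | h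
    · exfalso
      have h0 : 0 < Mo.qBM θ := by rw [← h]; exact hc_pos
      have h1 : Mo.qBM θ < E.qbar := qBM_lt_qbar Mo hθΘ
      have e1 : Mo.Pstar (Mo.qBM θ) = Mo.zstar θ := Pstar_qBM Mo h0 h1
      have e2 : Mo.zstar θ = Mo.zstar θm := by
        rw [← e1, ← h]; exact hPstar_c
      have := Mo.zstar_mono.injOn hθΘ hθmΘ e2
      exact absurd this (ne_of_lt hθ.2)
    · exact h
  have hqstar_mem : ∀ θ ∈ E.Θ, Mo.qstar θ ∈ Icc (0:ℝ) E.qbar := by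
    intro θ hθ
    exact ⟨hql_pos.le.trans (le_max_right _ _), max_le (qBM_mem Mo θ).2 hql_mem.2⟩
  -- `Pl c = θm`
  have hPlc_ge : θm ≤ E.Pl c := by
    by_contra hcon
    push_neg at hcon
    set t := (max E.θl (E.Pl c) + θm) / 2 with ht_def
    have hmax_lt : max E.θl (E.Pl c) < θm := max_lt hθmgt hcon
    have ht1 : max E.θl (E.Pl c) < t := by rw [ht_def]; linarith
    have ht2 : t < θm := by rw [ht_def]; linarith
    have htl : E.θl < t := lt_of_le_of_lt (le_max_left _ _) ht1
    have htΘ : t ∈ E.Θ := ⟨htl.le, ht2.le.trans hθmu⟩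
    have hPlt : E.Pl c < t := lt_of_le_of_lt (le_max_right _ _) ht1
    have hqst : Mo.qstar t = Mo.qBM t := hqstar_bot t ⟨htl.le, ht2.le⟩
    have hqst_gt : c < Mo.qstar t := by rw [hqst]; exact hqBM_gt t ⟨htl.le, ht2⟩
    have hqst_mem : Mo.qstar t ∈ Icc (0:ℝ) E.qbar := hqstar_mem t htΘ
    have h0 : E.Wl Mo.qstar θm ≤ E.Wl Mo.qstar t := hθm_min t htΘ
    have hsplit : (∫ y in t..E.θu, Mo.qstar y)
        = (∫ y in t..θm, Mo.qstar y) + ∫ y in θm..E.θu, Mo.qstar y :=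
      (intervalIntegral.integral_add_adjacent_intervals
        (sched_intInt hqstar_anti htΘ hθmΘ)
        (sched_intInt hqstar_anti hθmΘ (theta_mem_u))).symm
    have hVd : E.Vl (Mo.qstar t) - E.Vl c = ∫ s in c..(Mo.qstar t), E.Pl s :=
      Vl_sub hc_mem hqst_mem
    have hIle : (∫ s in c..(Mo.qstar t), E.Pl s) ≤ (Mo.qstar t - c) * E.Pl c :=
      int_le_left E.Pl_cont E.Pl_anti.antitoneOn hc_mem hqst_mem hqst_gt.le
    have hIc : (θm - t) * c ≤ ∫ y in t..θm, Mo.qstar y := by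
      have h5 := intervalIntegral.integral_mono_on (μ := volume) ht2.le
        (intervalIntegrable_const (c := c)) (sched_intInt hqstar_anti htΘ hθmΘ)
        (fun y hy => by
          rw [← hqstar_θm]
          exact hqstar_anti ⟨htl.le.trans hy.1, hy.2.trans hθmu⟩ hθmΘ hy.2)
      simpa using h5
    have hWt : E.Wl Mo.qstar t = E.Vl (Mo.qstar t) - t * Mo.qstar t
        - ((∫ y in t..θm, Mo.qstar y) + ∫ y in θm..E.θu, Mo.qstar y) := by
      simp only [Env.Wl]; rw [hsplit]
    have hWm : E.Wl Mo.qstar θm = E.Vl c - θm * c - ∫ y in θm..E.θu, Mo.qstar y := by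
      simp only [Env.Wl]; rw [hqstar_θm]
    rw [hWt, hWm] at h0
    nlinarith [hqst_gt, hPlt]
  have hPlc_le : E.Pl c ≤ θm := by
    rcases eq_or_lt_of_le hθmu with heq | hlt
    · calc E.Pl c ≤ E.Pl E.ql := E.Pl_anti.antitoneOn hql_mem hc_mem hql_le_c
      _ = E.θu := hPl_ql
      _ = θm := heq.symm
    · by_contra hcon
      push_neg at hcon
      set t := (θm + min E.θu (E.Pl c)) / 2 with ht_def
      have hmin_gt : θm < min E.θu (E.Pl c) := lt_min hlt hcon
      have ht1 : θm < t := by rw [ht_def]; linarith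
      have ht2 : t < min E.θu (E.Pl c) := by rw [ht_def]; linarith
      have htu : t < E.θu := lt_of_lt_of_le ht2 (min_le_left _ _)
      have htP : t < E.Pl c := lt_of_lt_of_le ht2 (min_le_right _ _)
      have htΘ : t ∈ E.Θ := ⟨(hθmΘ.1.trans ht1.le), htu.le⟩
      have hqst_le : Mo.qstar t ≤ c := hqstar_top_le t ⟨ht1.le, htu.le⟩
      have hqst_mem : Mo.qstar t ∈ Icc (0:ℝ) E.qbar := hqstar_mem t htΘ
      have hsplit : (∫ y in θm..E.θu, Mo.qstar y)
          = (∫ y in θm..t, Mo.qstar y) + ∫ y in t..E.θu, Mo.qstar y :=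
        (intervalIntegral.integral_add_adjacent_intervals
          (sched_intInt hqstar_anti hθmΘ htΘ)
          (sched_intInt hqstar_anti htΘ (theta_mem_u))).symm
      have hWt : E.Wl Mo.qstar t = E.Vl (Mo.qstar t) - t * Mo.qstar t
          - ∫ y in t..E.θu, Mo.qstar y := by simp only [Env.Wl]
      have hWm : E.Wl Mo.qstar θm = E.Vl c - θm * c
          - ((∫ y in θm..t, Mo.qstar y) + ∫ y in t..E.θu, Mo.qstar y) := by
        simp only [Env.Wl]; rw [hqstar_θm, hsplit]
      rcases eq_or_lt_of_le hqst_le with heqc | hltc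
      · -- `qstar ≡ c` on `[θm, t]`, so `t` is also a minimizer: contradiction
        have hconst : ∀ y ∈ Icc θm t, Mo.qstar y = c := by
          intro y hy
          have hyΘ : y ∈ E.Θ := ⟨hθmΘ.1.trans hy.1, hy.2.trans htu.le⟩
          have h1 : Mo.qstar y ≤ c := by rw [← hqstar_θm]; exact hqstar_anti hθmΘ hyΘ hy.1
          have h2 : c ≤ Mo.qstar y := by rw [← heqc]; exact hqstar_anti hyΘ htΘ hy.2
          exact le_antisymm h1 h2
        have hIconst : (∫ y in θm..t, Mo.qstar y) = (t - θm) * c := by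
          rw [intervalIntegral.integral_congr (g := fun _ => c)
            (fun y hy => hconst y (by rwa [uIcc_of_le ht1.le] at hy))]
          simp [smul_eq_mul]
        have heqW : E.Wl Mo.qstar t = E.Wl Mo.qstar θm := by
          rw [hWt, hWm, hIconst, heqc]
          ring
        have hmin' : ∀ θ' ∈ E.Θ, E.Wl Mo.qstar t ≤ E.Wl Mo.qstar θ' := by
          intro θ' h'
          rw [heqW]
          exact hθm_min θ' h'
        have := hθm_max t htΘ hmin'
        linarith
      · -- `qstar t < c`
        have h0 : E.Wl Mo.qstar θm ≤ E.Wl Mo.qstar t := hθm_min t htΘ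
        have hVd : E.Vl c - E.Vl (Mo.qstar t) = ∫ s in (Mo.qstar t)..c, E.Pl s :=
          Vl_sub hqst_mem hc_mem
        have hIge : (c - Mo.qstar t) * E.Pl c ≤ ∫ s in (Mo.qstar t)..c, E.Pl s :=
          left_le_int E.Pl_cont E.Pl_anti.antitoneOn hqst_mem hc_mem hltc.le
        have hIc : (∫ y in θm..t, Mo.qstar y) ≤ (t - θm) * c := by
          have h5 := intervalIntegral.integral_mono_on (μ := volume) ht1.le
            (sched_intInt hqstar_anti hθmΘ htΘ) (intervalIntegrable_const (c := c))
            (fun y hy => hqstar_top_le y ⟨hy.1, hy.2.trans htu.le⟩)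
          simpa using h5
        rw [hWt, hWm] at h0
        nlinarith [hltc, htP]
  have hPlc : E.Pl c = θm := le_antisymm hPlc_le hPlc_ge
  -- the modified schedule `qt`
  set qt : ℝ → ℝ := fun θ => if θ < θm then Mo.qBM θ else min (qOPT θ) c with hqt_def
  have hqt_bot : ∀ θ, θ < θm → qt θ = Mo.qBM θ := fun θ h => if_pos h
  have hqt_top : ∀ θ, θm ≤ θ → qt θ = min (qOPT θ) c := fun θ h => if_neg (not_lt.2 h)
  have hqt_anti : AntitoneOn qt E.Θ := by
    intro a ha b hb hab
    by_cases hb' : b < θm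
    · have ha' : a < θm := lt_of_le_of_lt hab hb'
      rw [hqt_bot a ha', hqt_bot b hb']
      exact qBM_anti Mo ha hb hab
    · push_neg at hb'
      rw [hqt_top b hb']
      by_cases ha' : a < θm
      · rw [hqt_bot a ha']
        exact (min_le_right _ _).trans (hqBM_gt a ⟨ha.1, ha'⟩).le
      · push_neg at ha'
        rw [hqt_top a ha']
        exact min_le_min (hq_anti ha hb hab) le_rfl
  have hqt_mem : ∀ θ ∈ E.Θ, qt θ ∈ Icc (0:ℝ) E.qbar := by
    intro θ hθ
    by_cases h : θ < θm
    · rw [hqt_bot θ h]; exact qBM_mem Mo θ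
    · push_neg at h
      rw [hqt_top θ h]
      exact ⟨le_min (hq_mem θ hθ).1 hc_pos.le, (min_le_left _ _).trans (hq_mem θ hθ).2⟩
  have hmin_anti : AntitoneOn (fun y => min (qOPT y) c) E.Θ := fun a ha b hb hab =>
    min_le_min (hq_anti ha hb hab) le_rfl
  -- constraints hold at the top
  have hqt_con_top : ∀ θ ∈ Icc θm E.θu, E.Gstar ≤ E.Wl qt θ := by
    intro θ hθ
    have hθΘ : θ ∈ E.Θ := ⟨hθmΘ.1.trans hθ.1, hθ.2⟩
    have hIeq : (∫ y in θ..E.θu, qt y) = ∫ y in θ..E.θu, min (qOPT y) c := by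
      apply intervalIntegral.integral_congr
      intro y hy
      rw [uIcc_of_le hθ.2] at hy
      exact hqt_top y (hθ.1.trans hy.1)
    have hIle : (∫ y in θ..E.θu, min (qOPT y) c) ≤ ∫ y in θ..E.θu, qOPT y :=
      intervalIntegral.integral_mono_on hθ.2 (sched_intInt hmin_anti hθΘ (theta_mem_u))
        (sched_intInt hq_anti hθΘ (theta_mem_u)) (fun y _ => min_le_left _ _)
    have hown : E.Vl (qOPT θ) - θ * qOPT θ ≤ E.Vl (min (qOPT θ) c) - θ * min (qOPT θ) c := by
      rcases le_or_gt (qOPT θ) c with h | h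
      · rw [min_eq_left h]
      · rw [min_eq_right h.le]
        have hVd : E.Vl (qOPT θ) - E.Vl c = ∫ s in c..(qOPT θ), E.Pl s :=
          Vl_sub hc_mem (hq_mem θ hθΘ)
        have hI : (∫ s in c..(qOPT θ), E.Pl s) ≤ (qOPT θ - c) * E.Pl c :=
          int_le_left E.Pl_cont E.Pl_anti.antitoneOn hc_mem (hq_mem θ hθΘ) h.le
        have hPθ : E.Pl c ≤ θ := by rw [hPlc]; exact hθ.1
        nlinarith
    have hcon := hq_con θ hθΘ
    simp only [Env.Wl] at hcon ⊢
    rw [hqt_top θ hθ.1, hIeq]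
    linarith
  -- constraints hold everywhere
  have hqt_con : ∀ θ ∈ E.Θ, E.Gstar ≤ E.Wl qt θ := by
    intro θ hθ
    rcases le_or_gt θm θ with ht | hb
    · exact hqt_con_top θ ⟨ht, hθ.2⟩
    · have hcongr1 : (∫ y in θ..θm, qt y) = ∫ y in θ..θm, Mo.qstar y := by
        apply intervalIntegral.integral_congr_ae
        have h1 : ∀ᵐ (y : ℝ) ∂volume, y ≠ θm := by
          rw [ae_iff]
          simp only [not_not, setOf_eq_eq_singleton]
          exact measure_singleton θm
        filter_upwards [h1] with y hy hyI
        rw [uIoc_of_le hb.le] at hyI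
        have hylt : y < θm := lt_of_le_of_ne hyI.2 hy
        rw [hqt_bot y hylt, hqstar_bot y ⟨hθ.1.trans hyI.1.le, hyI.2⟩]
      have e1 : (∫ y in θ..E.θu, qt y)
          = (∫ y in θ..θm, Mo.qstar y) + ∫ y in θm..E.θu, qt y := by
        rw [← hcongr1]
        exact (intervalIntegral.integral_add_adjacent_intervals
          (sched_intInt hqt_anti hθ hθmΘ) (sched_intInt hqt_anti hθmΘ (theta_mem_u))).symm
      have e2 : (∫ y in θ..E.θu, Mo.qstar y)
          = (∫ y in θ..θm, Mo.qstar y) + ∫ y in θm..E.θu, Mo.qstar y :=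
        (intervalIntegral.integral_add_adjacent_intervals
          (sched_intInt hqstar_anti hθ hθmΘ) (sched_intInt hqstar_anti hθmΘ (theta_mem_u))).symm
      have e3 : qt θ = Mo.qstar θ := by
        rw [hqt_bot θ hb, hqstar_bot θ ⟨hθ.1, hb.le⟩]
      have h0 : E.Wl Mo.qstar θm ≤ E.Wl Mo.qstar θ := hθm_min θ hθ
      have hqtθm_mem : qt θm ∈ Icc (0:ℝ) E.qbar := hqt_mem θm hθmΘ
      have hqtθm_le : qt θm ≤ c := by rw [hqt_top θm le_rfl]; exact min_le_right _ _
      have hown2 : E.Vl (qt θm) - θm * qt θm ≤ E.Vl c - θm * c := by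
        have hVd : E.Vl c - E.Vl (qt θm) = ∫ s in (qt θm)..c, E.Pl s :=
          Vl_sub hqtθm_mem hc_mem
        have hI : (c - qt θm) * E.Pl c ≤ ∫ s in (qt θm)..c, E.Pl s :=
          left_le_int E.Pl_cont E.Pl_anti.antitoneOn hqtθm_mem hc_mem hqtθm_le
        nlinarith [hPlc]
      have htail := hqt_con_top θm ⟨le_rfl, hθmu⟩
      simp only [Env.Wl] at h0 htail ⊢
      rw [e1, e3]
      rw [e2, hqstar_θm] at h0
      linarith
  have hqt_feas : E.FeasibleROPT qt := ⟨⟨hqt_anti, hqt_mem⟩, hqt_con⟩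
  -- pointwise comparison of the (ROPT) integrands
  have hpoint : ∀ θ ∈ Icc E.θl E.θu,
      (Mo.Vstar (qOPT θ) - Mo.zstar θ * qOPT θ) * Mo.fstar θ
        ≤ (Mo.Vstar (qt θ) - Mo.zstar θ * qt θ) * Mo.fstar θ := by
    intro θ hθ
    apply mul_le_mul_of_nonneg_right _ (Mo.fstar_pos θ hθ).le
    rcases lt_or_ge θ θm with h | h
    · rw [hqt_bot θ h]
      exact argmax_le Mo _ (hq_mem θ hθ)
    · rw [hqt_top θ h]
      rcases le_or_gt (qOPT θ) c with hle | hgt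
      · rw [min_eq_left hle]
      · rw [min_eq_right hgt.le]
        have hVd : Mo.Vstar (qOPT θ) - Mo.Vstar c = ∫ s in c..(qOPT θ), Mo.Pstar s :=
          Vstar_sub Mo hc_mem (hq_mem θ hθ)
        have hI : (∫ s in c..(qOPT θ), Mo.Pstar s) ≤ (qOPT θ - c) * Mo.Pstar c :=
          int_le_left Mo.Pstar_cont Mo.Pstar_anti.antitoneOn hc_mem (hq_mem θ hθ) hgt.le
        have hz : Mo.Pstar c ≤ Mo.zstar θ := by
          rw [hPstar_c]
          exact Mo.zstar_mono.monotoneOn hθmΘ hθ h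
        nlinarith
  have hJle : Mo.J qt ≤ Mo.J qOPT := hq_opt qt hqt_feas
  have hJge : Mo.J qOPT ≤ Mo.J qt := by
    simp only [Model.J]
    exact intervalIntegral.integral_mono_on E.θlu.le (J_int Mo hq_anti hq_mem)
      (J_int Mo hqt_anti hqt_mem) hpoint
  set F : ℝ → ℝ := fun θ => (Mo.Vstar (qt θ) - Mo.zstar θ * qt θ) * Mo.fstar θ
    - (Mo.Vstar (qOPT θ) - Mo.zstar θ * qOPT θ) * Mo.fstar θ with hF_def
  have hF_int : IntervalIntegrable F volume E.θl E.θu :=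
    (J_int Mo hqt_anti hqt_mem).sub (J_int Mo hq_anti hq_mem)
  have hF_zero : (∫ θ in E.θl..E.θu, F θ) = 0 := by
    have hJeq : Mo.J qt = Mo.J qOPT := le_antisymm hJle hJge
    simp only [Model.J] at hJeq
    simp only [hF_def]
    rw [intervalIntegral.integral_sub (J_int Mo hqt_anti hqt_mem) (J_int Mo hq_anti hq_mem),
      hJeq, sub_self]
  have hF_int' : Integrable F (volume.restrict (Ioc E.θl E.θu)) :=
    (intervalIntegrable_iff_integrableOn_Ioc_of_le E.θlu.le).1 hF_int
  have hF_nonneg : 0 ≤ᵐ[volume.restrict (Ioc E.θl E.θu)] F := by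
    apply (ae_restrict_iff' measurableSet_Ioc).2
    apply Filter.Eventually.of_forall
    intro θ hθ
    exact sub_nonneg.2 (hpoint θ ⟨hθ.1.le, hθ.2⟩)
  have hF_ae : F =ᵐ[volume.restrict (Ioc E.θl E.θu)] 0 := by
    apply (MeasureTheory.integral_eq_zero_iff_of_nonneg_ae hF_nonneg hF_int').1
    rw [← intervalIntegral.integral_of_le E.θlu.le]
    exact hF_zero
  have hbadnull : volume ({θ | ¬ F θ = 0} ∩ Ioc E.θl E.θu) = 0 := by
    have h := hF_ae
    rw [Filter.EventuallyEq, ae_iff] at h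
    simp only [Pi.zero_apply] at h
    rwa [Measure.restrict_apply' measurableSet_Ioc] at h
  -- density of the agreement set
  have hdense : ∀ a b : ℝ, E.θl ≤ a → a < b → b ≤ θm →
      ∃ s, s ∈ Ioo a b ∧ qOPT s = Mo.qBM s := by
    intro a b hla hab hbm
    by_contra hno
    push_neg at hno
    have hsub : Ioo a b ⊆ {θ | ¬ F θ = 0} ∩ Ioc E.θl E.θu := by
      intro s hs
      have hsθm : s < θm := lt_of_lt_of_le hs.2 hbm
      have hsl : E.θl < s := lt_of_le_of_lt hla hs.1
      have hsΘ : s ∈ E.Θ := ⟨hsl.le, hsθm.le.trans hθmu⟩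
      refine ⟨?_, hsl, hsθm.le.trans hθmu⟩
      intro hF0
      have hqs : qOPT s ≠ Mo.qBM s := hno s hs
      have hstrict := argmax_strict Mo (qOPT s) (hq_mem s hsΘ) hqs
      have hfpos := Mo.fstar_pos s hsΘ
      have hpos : 0 < F s := by
        simp only [hF_def]
        rw [hqt_bot s hsθm]
        nlinarith
      rw [hF0] at hpos
      exact lt_irrefl _ hpos
    have h1 : volume (Ioo a b) = 0 := measure_mono_null hsub hbadnull
    rw [Real.volume_Ioo, ENNReal.ofReal_eq_zero] at h1
    linarith
  -- conclusion, via continuity of `zstar`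
  intro θ0 hθ0
  by_contra hne0
  have hθ0m : θ0 < θm := hθ0.2
  have hθ0Θ : θ0 ∈ E.Θ := ⟨hθ0.1.le, hθ0m.le.trans hθmu⟩
  have hq0_mem := hq_mem θ0 hθ0Θ
  have hqBM0_pos : 0 < Mo.qBM θ0 := hc_pos.trans (hqBM_gt θ0 ⟨hθ0.1.le, hθ0m⟩)
  have hqBM0_lt : Mo.qBM θ0 < E.qbar := qBM_lt_qbar Mo hθ0Θ
  have hP0 : Mo.Pstar (Mo.qBM θ0) = Mo.zstar θ0 := Pstar_qBM Mo hqBM0_pos hqBM0_lt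
  have hzc : ContinuousWithinAt (fun θ => θ + Mo.Fstar θ / Mo.fstar θ) E.Θ θ0 :=
    Mo.zstar_cont θ0 hθ0Θ
  rcases lt_or_gt_of_ne hne0 with hlt | hgt
  · -- `qOPT θ0 < qBM θ0` : approach `θ0` from the right
    have hPgt : Mo.zstar θ0 < Mo.Pstar (qOPT θ0) := by
      rw [← hP0]
      exact Mo.Pstar_anti hq0_mem (qBM_mem Mo θ0) hlt
    set ε := Mo.Pstar (qOPT θ0) - Mo.zstar θ0 with hε_def
    have hε : 0 < ε := sub_pos.2 hPgt
    obtain ⟨δ, hδ, hδP⟩ := Metric.continuousWithinAt_iff.1 hzc ε hε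
    obtain ⟨s, hs, hsq⟩ := hdense θ0 (min θm (θ0 + δ)) hθ0.1.le
      (lt_min hθ0m (by linarith)) (min_le_left _ _)
    have hsθm : s < θm := lt_of_lt_of_le hs.2 (min_le_left _ _)
    have hsΘ : s ∈ E.Θ := ⟨(hθ0.1.trans hs.1).le, hsθm.le.trans hθmu⟩
    have hqBMs_pos : 0 < Mo.qBM s := hc_pos.trans (hqBM_gt s ⟨hsΘ.1, hsθm⟩)
    have hPs : Mo.Pstar (Mo.qBM s) = Mo.zstar s :=
      Pstar_qBM Mo hqBMs_pos (qBM_lt_qbar Mo hsΘ)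
    have hle1 : Mo.qBM s ≤ qOPT θ0 := by
      rw [← hsq]
      exact hq_anti hθ0Θ hsΘ hs.1.le
    have hle2 : Mo.Pstar (qOPT θ0) ≤ Mo.Pstar (Mo.qBM s) :=
      Mo.Pstar_anti.antitoneOn (qBM_mem Mo s) hq0_mem hle1
    have hdist : dist s θ0 < δ := by
      rw [Real.dist_eq, abs_lt]
      have h2 := hs.2
      have h3 := min_le_right θm (θ0 + δ)
      constructor
      · linarith [hs.1]
      · linarith
    have hz := hδP hsΘ hdist
    rw [Real.dist_eq, abs_lt] at hz
    have hz2 : Mo.zstar s - Mo.zstar θ0 < ε := hz.2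
    have h4 : Mo.zstar θ0 + ε ≤ Mo.zstar s := by
      rw [← hPs]
      rw [hε_def]
      linarith
    linarith
  · -- `qBM θ0 < qOPT θ0` : approach `θ0` from the left
    have hPlt2 : Mo.Pstar (qOPT θ0) < Mo.zstar θ0 := by
      rw [← hP0]
      exact Mo.Pstar_anti (qBM_mem Mo θ0) hq0_mem hgt
    set ε := Mo.zstar θ0 - Mo.Pstar (qOPT θ0) with hε_def
    have hε : 0 < ε := sub_pos.2 hPlt2
    obtain ⟨δ, hδ, hδP⟩ := Metric.continuousWithinAt_iff.1 hzc ε hε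
    obtain ⟨s, hs, hsq⟩ := hdense (max E.θl (θ0 - δ)) θ0 (le_max_left _ _)
      (max_lt hθ0.1 (by linarith)) hθ0m.le
    have hsl : E.θl < s := lt_of_le_of_lt (le_max_left _ _) hs.1
    have hsθm : s < θm := hs.2.trans hθ0m
    have hsΘ : s ∈ E.Θ := ⟨hsl.le, hsθm.le.trans hθmu⟩
    have hqBMs_pos : 0 < Mo.qBM s := hc_pos.trans (hqBM_gt s ⟨hsΘ.1, hsθm⟩)
    have hPs : Mo.Pstar (Mo.qBM s) = Mo.zstar s :=
      Pstar_qBM Mo hqBMs_pos (qBM_lt_qbar Mo hsΘ)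
    have hle1 : qOPT θ0 ≤ Mo.qBM s := by
      rw [← hsq]
      exact hq_anti hsΘ hθ0Θ hs.2.le
    have hle2 : Mo.Pstar (Mo.qBM s) ≤ Mo.Pstar (qOPT θ0) :=
      Mo.Pstar_anti.antitoneOn hq0_mem (qBM_mem Mo s) hle1
    have hdist : dist s θ0 < δ := by
      rw [Real.dist_eq, abs_lt]
      have h2 := hs.1
      have h3 := le_max_right E.θl (θ0 - δ)
      constructor
      · linarith
      · linarith [hs.2]
    have hz := hδP hsΘ hdist
    rw [Real.dist_eq, abs_lt] at hz
    have hz1 : -ε < Mo.zstar s - Mo.zstar θ0 := hz.1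
    have h4 : Mo.zstar s ≤ Mo.zstar θ0 - ε := by
      rw [← hPs, hε_def]
      linarith
    linarith
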